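/- Let n(t) = (z₀(t), z₁(t), z₂(t)) be a differentiable curve in ℂ³ whose values are null vectors (nonzero, with |z₁(t)|² + |z₂(t)|² = |z₀(t)|² for all t), and set w(t) = (z₁(t)/z₀(t), z₂(t)/z₀(t)) ∈ S³ ⊂ ℂ². Then for every t, Re(−i(z̄₁ z₁′ + z̄₂ z₂′ − z̄₀ z₀′)) = |z₀|² · Re(−i(w̄₁ w₁′ + w̄₂ w₂′)), where ′ denotes the derivative at t. -/

import Mathlib

/-- Let `n(t) = (z₀(t), z₁(t), z₂(t))` be a differentiable curve of null
vectors (nonzero, `|z₁|² + |z₂|² = |z₀|²`), and let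
`w(t) = (z₁(t)/z₀(t), z₂(t)/z₀(t)) ∈ S³ ⊂ ℂ²`.  Then for every `t`,
`Re(−i(z̄₁z₁′ + z̄₂z₂′ − z̄₀z₀′)) = |z₀|² · Re(−i(w̄₁w₁′ + w̄₂w₂′))`,
i.e. `⟨n′, i n⟩ = |z₀|² ⟨w′, i w⟩`. -/
theorem contact_pairing_scales (z₀ z₁ z₂ : ℝ → ℂ)
    (hd₀ : Differentiable ℝ z₀) (hd₁ : Differentiable ℝ z₁)
    (hd₂ : Differentiable ℝ z₂)
    (hnz : ∀ t, (z₀ t, z₁ t, z₂ t) ≠ (0, 0, 0))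
    (hnull : ∀ t, ‖z₁ t‖ ^ 2 + ‖z₂ t‖ ^ 2 =
      ‖z₀ t‖ ^ 2) :
    ∀ t : ℝ,
      (-Complex.I * ((starRingEnd ℂ) (z₁ t) * deriv z₁ t +
          (starRingEnd ℂ) (z₂ t) * deriv z₂ t -
          (starRingEnd ℂ) (z₀ t) * deriv z₀ t)).re =
      ‖z₀ t‖ ^ 2 *
        (-Complex.I * ((starRingEnd ℂ) (z₁ t / z₀ t) *
            deriv (fun s => z₁ s / z₀ s) t +
          (starRingEnd ℂ) (z₂ t / z₀ t) *
            deriv (fun s => z₂ s / z₀ s) t)).re := by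
  intro t
  have h0 : z₀ t ≠ 0 := by
    intro h
    have hn := hnull t
    rw [h] at hn
    simp at hn
    have h1 : z₁ t = 0 := by
      have := norm_nonneg (z₁ t)
      have := norm_nonneg (z₂ t)
      have : ‖z₁ t‖ = 0 := by nlinarith [sq_nonneg (‖z₁ t‖), sq_nonneg (‖z₂ t‖)]
      simpa using this
    have h2 : z₂ t = 0 := by
      have : ‖z₂ t‖ = 0 := by nlinarith [sq_nonneg (‖z₁ t‖), sq_nonneg (‖z₂ t‖)]
      simpa using this
    exact hnz t (by simp [h, h1, h2])
  have hder₁ : deriv (fun s => z₁ s / z₀ s) t =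
      (deriv z₁ t * z₀ t - z₁ t * deriv z₀ t) / z₀ t ^ 2 :=
    deriv_div (hd₁ t) (hd₀ t) h0
  have hder₂ : deriv (fun s => z₂ s / z₀ s) t =
      (deriv z₂ t * z₀ t - z₂ t * deriv z₀ t) / z₀ t ^ 2 :=
    deriv_div (hd₂ t) (hd₀ t) h0
  have habs : ((‖z₀ t‖ : ℂ)) ^ 2 = z₀ t * (starRingEnd ℂ) (z₀ t) := by
    rw [← Complex.ofReal_pow, Complex.sq_norm, Complex.mul_conj]
  have hnullc : (starRingEnd ℂ) (z₁ t) * z₁ t + (starRingEnd ℂ) (z₂ t) * z₂ t =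
      (starRingEnd ℂ) (z₀ t) * z₀ t := by
    have h := hnull t
    rw [Complex.sq_norm, Complex.sq_norm, Complex.sq_norm] at h
    rw [← Complex.normSq_eq_conj_mul_self, ← Complex.normSq_eq_conj_mul_self,
      ← Complex.normSq_eq_conj_mul_self]
    exact_mod_cast congrArg (Complex.ofReal) h
  have key : (-Complex.I * ((starRingEnd ℂ) (z₁ t) * deriv z₁ t +
          (starRingEnd ℂ) (z₂ t) * deriv z₂ t -
          (starRingEnd ℂ) (z₀ t) * deriv z₀ t)) =
      ((‖z₀ t‖ : ℂ)) ^ 2 *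
        (-Complex.I * ((starRingEnd ℂ) (z₁ t / z₀ t) *
            deriv (fun s => z₁ s / z₀ s) t +
          (starRingEnd ℂ) (z₂ t / z₀ t) *
            deriv (fun s => z₂ s / z₀ s) t)) := by
    rw [hder₁, hder₂, habs, map_div₀, map_div₀]
    have h0' : (starRingEnd ℂ) (z₀ t) ≠ 0 := by simpa using h0
    field_simp
    linear_combination (-deriv z₀ t) * hnullc
  rw [key, ← Complex.ofReal_pow, Complex.re_ofReal_mul]
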